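/- If f : [0,1] → ℝ is absolutely continuous with f' ∈ L²(0,1), then |Q(f)| ≤ √(11/96 - √2/16) · σ(f'), where σ(f') = (∫₀¹ f'(t)² dt - (∫₀¹ f'(t) dt)²)^{1/2} and Q(f) = ∫₀¹ f(t) dt - (√2/8) f(0) - (1 - √2/4) f(1/2) - (√2/8) f(1). Moreover the constant √(11/96 - √2/16) is sharp. -/

import Mathlib

open MeasureTheory Real Set

noncomputable def K0 : ℝ → ℝ := fun s => if s ≤ 1/2 then Real.sqrt 2/8 - s else 1 - s - Real.sqrt 2/8

lemma K0_eq1 {s : ℝ} (h : s ≤ 1/2) : K0 s = Real.sqrt 2/8 - s := if_pos h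
lemma K0_eq2 {s : ℝ} (h : ¬ s ≤ 1/2) : K0 s = 1 - s - Real.sqrt 2/8 := if_neg h

lemma ipoly (a b A B C : ℝ) :
    (∫ s in a..b, (A + B*s + C*s^2)) = A*(b-a) + B*(b^2-a^2)/2 + C*(b^3-a^3)/3 := by
  have h1 : IntervalIntegrable (fun _ : ℝ => A) volume a b := intervalIntegrable_const
  have h2 : IntervalIntegrable (fun s : ℝ => B*s) volume a b :=
    ((continuous_const.mul continuous_id).intervalIntegrable a b)
  have h3 : IntervalIntegrable (fun s : ℝ => C*s^2) volume a b :=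
    ((continuous_const.mul (continuous_pow 2)).intervalIntegrable a b)
  rw [intervalIntegral.integral_add (h1.add h2) h3, intervalIntegral.integral_add h1 h2,
    intervalIntegral.integral_const, intervalIntegral.integral_const_mul,
    intervalIntegral.integral_const_mul, integral_id, integral_pow]
  push_cast
  simp only [smul_eq_mul]
  ring

/-- split an integral over `Ioc 0 1` at `1/2`. -/
lemma splitIoc {F G1 G2 : ℝ → ℝ}
    (hpc1 : ∀ s ∈ Ioc (0:ℝ) (1/2), F s = G1 s) (hpc2 : ∀ s ∈ Ioc (1/2:ℝ) 1, F s = G2 s)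
    (hG1 : IntegrableOn G1 (Ioc (0:ℝ) (1/2)) volume)
    (hG2 : IntegrableOn G2 (Ioc (1/2:ℝ) 1) volume) :
    IntegrableOn F (Ioc (0:ℝ) 1) volume ∧
      (∫ s in Ioc (0:ℝ) 1, F s) = (∫ s in (0:ℝ)..(1/2), G1 s) + ∫ s in (1/2:ℝ)..1, G2 s := by
  have e1 : EqOn G1 F (Ioc (0:ℝ) (1/2)) := fun s hs => (hpc1 s hs).symm
  have e2 : EqOn G2 F (Ioc (1/2:ℝ) 1) := fun s hs => (hpc2 s hs).symm
  have i1 : IntegrableOn F (Ioc (0:ℝ) (1/2)) volume := hG1.congr_fun e1 measurableSet_Ioc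
  have i2 : IntegrableOn F (Ioc (1/2:ℝ) 1) volume := hG2.congr_fun e2 measurableSet_Ioc
  have hunion : Ioc (0:ℝ) 1 = Ioc (0:ℝ) (1/2) ∪ Ioc (1/2:ℝ) 1 :=
    (Ioc_union_Ioc_eq_Ioc (by norm_num) (by norm_num)).symm
  constructor
  · rw [hunion]; exact i1.union i2
  · rw [hunion, setIntegral_union (Ioc_disjoint_Ioc_of_le le_rfl) measurableSet_Ioc i1 i2,
      setIntegral_congr_fun measurableSet_Ioc e1.symm,
      setIntegral_congr_fun measurableSet_Ioc e2.symm,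
      ← intervalIntegral.integral_of_le (by norm_num : (0:ℝ) ≤ 1/2),
      ← intervalIntegral.integral_of_le (by norm_num : (1/2:ℝ) ≤ 1)]

lemma K0mul {h : ℝ → ℝ} (hh : IntegrableOn h (Ioc (0:ℝ) 1) volume) :
    IntegrableOn (fun s => K0 s * h s) (Ioc (0:ℝ) 1) volume ∧
      (∫ s in Ioc (0:ℝ) 1, K0 s * h s) =
        (∫ s in (0:ℝ)..(1/2), (Real.sqrt 2/8 - s) * h s)
          + ∫ s in (1/2:ℝ)..1, (1 - s - Real.sqrt 2/8) * h s := by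
  have hh1 : IntervalIntegrable h volume 0 (1/2) :=
    (intervalIntegrable_iff_integrableOn_Ioc_of_le (by norm_num)).mpr
      (hh.mono_set (Ioc_subset_Ioc_right (by norm_num)))
  have hh2 : IntervalIntegrable h volume (1/2) 1 :=
    (intervalIntegrable_iff_integrableOn_Ioc_of_le (by norm_num)).mpr
      (hh.mono_set (Ioc_subset_Ioc_left (by norm_num)))
  refine splitIoc (fun s hs => by rw [K0_eq1 hs.2]) (fun s hs => by rw [K0_eq2 (not_le.mpr hs.1)]) ?_ ?_
  · exact (intervalIntegrable_iff_integrableOn_Ioc_of_le (by norm_num)).mp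
      (hh1.continuousOn_mul ((continuous_const.sub continuous_id).continuousOn))
  · exact (intervalIntegrable_iff_integrableOn_Ioc_of_le (by norm_num)).mp
      (hh2.continuousOn_mul (((continuous_const.sub continuous_id).sub continuous_const).continuousOn))

lemma K0sq_split :
    IntegrableOn (fun s => (K0 s)^2) (Ioc (0:ℝ) 1) volume ∧
      (∫ s in Ioc (0:ℝ) 1, (K0 s)^2) =
        (∫ s in (0:ℝ)..(1/2), (Real.sqrt 2/8 - s)^2)
          + ∫ s in (1/2:ℝ)..1, (1 - s - Real.sqrt 2/8)^2 := by
  refine splitIoc (fun s hs => by rw [K0_eq1 hs.2]) (fun s hs => by rw [K0_eq2 (not_le.mpr hs.1)]) ?_ ?_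
  · exact (intervalIntegrable_iff_integrableOn_Ioc_of_le (by norm_num)).mp
      (((continuous_const.sub continuous_id).pow 2).intervalIntegrable _ _)
  · exact (intervalIntegrable_iff_integrableOn_Ioc_of_le (by norm_num)).mp
      ((((continuous_const.sub continuous_id).sub continuous_const).pow 2).intervalIntegrable _ _)

lemma K0_split :
    IntegrableOn K0 (Ioc (0:ℝ) 1) volume ∧
      (∫ s in Ioc (0:ℝ) 1, K0 s) =
        (∫ s in (0:ℝ)..(1/2), (Real.sqrt 2/8 - s))
          + ∫ s in (1/2:ℝ)..1, (1 - s - Real.sqrt 2/8) := by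
  refine splitIoc (fun s hs => K0_eq1 hs.2) (fun s hs => K0_eq2 (not_le.mpr hs.1)) ?_ ?_
  · exact (intervalIntegrable_iff_integrableOn_Ioc_of_le (by norm_num)).mp
      ((continuous_const.sub continuous_id).intervalIntegrable _ _)
  · exact (intervalIntegrable_iff_integrableOn_Ioc_of_le (by norm_num)).mp
      (((continuous_const.sub continuous_id).sub continuous_const).intervalIntegrable _ _)

lemma intK0_zero : (∫ s in Ioc (0:ℝ) 1, K0 s) = 0 := by
  rw [K0_split.2]
  rw [show (fun s : ℝ => Real.sqrt 2/8 - s) = (fun s : ℝ => Real.sqrt 2/8 + (-1)*s + 0*s^2) by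
       funext s; ring,
     show (fun s : ℝ => 1 - s - Real.sqrt 2/8) = (fun s : ℝ => (1 - Real.sqrt 2/8) + (-1)*s + 0*s^2) by
       funext s; ring, ipoly, ipoly]
  ring

lemma intK0sq : (∫ s in Ioc (0:ℝ) 1, (K0 s)^2) = 11/96 - Real.sqrt 2/16 := by
  have hs2 : Real.sqrt 2 ^ 2 = 2 := Real.sq_sqrt (by norm_num)
  rw [K0sq_split.2]
  rw [show (fun s : ℝ => (Real.sqrt 2/8 - s)^2)
        = (fun s : ℝ => (Real.sqrt 2/8)^2 + (-(Real.sqrt 2/4))*s + 1*s^2) by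
       funext s; ring,
     show (fun s : ℝ => (1 - s - Real.sqrt 2/8)^2)
        = (fun s : ℝ => (1 - Real.sqrt 2/8)^2 + (-(2*(1 - Real.sqrt 2/8)))*s + 1*s^2) by
       funext s; ring, ipoly, ipoly]
  nlinarith [hs2]

/-- Cauchy-Schwarz on `Ioc 0 1`. -/
lemma cs_Ioc {g h : ℝ → ℝ}
    (hg2 : IntegrableOn (fun s => (g s)^2) (Ioc (0:ℝ) 1) volume)
    (hh2 : IntegrableOn (fun s => (h s)^2) (Ioc (0:ℝ) 1) volume)
    (hgh : IntegrableOn (fun s => g s * h s) (Ioc (0:ℝ) 1) volume) :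
    (∫ s in Ioc (0:ℝ) 1, g s * h s)^2
      ≤ (∫ s in Ioc (0:ℝ) 1, (g s)^2) * (∫ s in Ioc (0:ℝ) 1, (h s)^2) := by
  obtain ⟨A, hA⟩ : ∃ A : ℝ, (∫ s in Ioc (0:ℝ) 1, (g s)^2) = A := ⟨_, rfl⟩
  obtain ⟨B, hB⟩ : ∃ B : ℝ, (∫ s in Ioc (0:ℝ) 1, g s * h s) = B := ⟨_, rfl⟩
  obtain ⟨C, hC⟩ : ∃ C : ℝ, (∫ s in Ioc (0:ℝ) 1, (h s)^2) = C := ⟨_, rfl⟩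
  rw [hA, hB, hC]
  have hA0 : 0 ≤ A := hA ▸ integral_nonneg fun s => sq_nonneg _
  have hC0 : 0 ≤ C := hC ▸ integral_nonneg fun s => sq_nonneg _
  have key : 0 ≤ C^2*A - 2*C*B*B + B^2*C := by
    have h0 : 0 ≤ ∫ s in Ioc (0:ℝ) 1, (C * g s - B * h s)^2 :=
      integral_nonneg fun s => sq_nonneg _
    have e : (fun s => (C * g s - B * h s)^2)
        = fun s => (C^2*(g s)^2 - (2*C*B)*(g s * h s)) + B^2*((h s)^2) := by
      funext s; ring
    have i1 : IntegrableOn (fun s => C^2*(g s)^2 - (2*C*B)*(g s * h s)) (Ioc (0:ℝ) 1) volume := by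
      have := (hg2.const_mul (C^2)).sub (hgh.const_mul (2*C*B))
      exact this
    have i2 : IntegrableOn (fun s => B^2*((h s)^2)) (Ioc (0:ℝ) 1) volume := hh2.const_mul _
    rw [e, integral_add i1 i2,
      integral_sub (hg2.const_mul (C^2)) (hgh.const_mul (2*C*B)),
      integral_const_mul, integral_const_mul, integral_const_mul, hA, hB, hC] at h0
    linarith
  rcases eq_or_lt_of_le hC0 with hCz | hCp
  · have hzero : (fun s => (h s)^2) =ᵐ[volume.restrict (Ioc (0:ℝ) 1)] 0 := by
      refine (integral_eq_zero_iff_of_nonneg (fun s => sq_nonneg (h s)) hh2).mp ?_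
      rw [hC]; exact hCz.symm
    have hB0 : B = 0 := by
      have h2 : (fun s => g s * h s) =ᵐ[volume.restrict (Ioc (0:ℝ) 1)] 0 := by
        filter_upwards [hzero] with s hs
        have hs0 : h s = 0 := by
          have := hs
          simp only [Pi.zero_apply] at this
          exact pow_eq_zero_iff (n := 2) (by norm_num) |>.mp this
        simp [hs0]
      rw [← hB, integral_congr_ae h2]
      simp
    rw [hB0, ← hCz]
    simp
  · nlinarith [key, hCp]

/-- Fubini: integral of the primitive. -/
lemma prim {f' : ℝ → ℝ} (hf' : IntervalIntegrable f' volume 0 1) :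
    (∫ t in (0:ℝ)..1, (∫ s in (0:ℝ)..t, f' s)) = ∫ s in (0:ℝ)..1, (1 - s) * f' s := by
  have h01 : (0:ℝ) ≤ 1 := by norm_num
  have hint : Integrable f' (volume.restrict (Ioc (0:ℝ) 1)) := hf'.1
  set μ := volume.restrict (Ioc (0:ℝ) 1) with hμ
  have hprob : IsProbabilityMeasure μ := ⟨by rw [hμ, Measure.restrict_apply_univ, Real.volume_Ioc]; norm_num⟩
  rw [intervalIntegral.integral_of_le h01, intervalIntegral.integral_of_le h01]
  have step1 : (∫ t in Ioc (0:ℝ) 1, (∫ s in (0:ℝ)..t, f' s))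
      = ∫ t, (∫ s, (Ioc (0:ℝ) t).indicator f' s ∂μ) ∂μ := by
    refine setIntegral_congr_fun measurableSet_Ioc (fun t ht => ?_)
    rw [intervalIntegral.integral_of_le ht.1.le, hμ, setIntegral_indicator measurableSet_Ioc,
      inter_eq_self_of_subset_right (Ioc_subset_Ioc_right ht.2)]
  have hS : MeasurableSet {p : ℝ × ℝ | 0 < p.2 ∧ p.2 ≤ p.1} :=
    (measurableSet_lt measurable_const measurable_snd).inter
      (measurableSet_le measurable_snd measurable_fst)
  have hsnd : Integrable (fun p : ℝ × ℝ => f' p.2) (μ.prod μ) := by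
    have hmap : (μ.prod μ).map Prod.snd = μ := Measure.snd_prod
    have h1 : Integrable f' ((μ.prod μ).map Prod.snd) := by rw [hmap]; exact hint
    have h2 : AEStronglyMeasurable f' ((μ.prod μ).map Prod.snd) := by
      rw [hmap]; exact hint.aestronglyMeasurable
    exact (integrable_map_measure h2 measurable_snd.aemeasurable).mp h1
  have hunc : Integrable (Function.uncurry fun t s => (Ioc (0:ℝ) t).indicator f' s) (μ.prod μ) := by
    have e : (Function.uncurry fun t s => (Ioc (0:ℝ) t).indicator f' s)
        = {p : ℝ × ℝ | 0 < p.2 ∧ p.2 ≤ p.1}.indicator (fun p => f' p.2) := by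
      funext p
      obtain ⟨t, s⟩ := p
      simp only [Function.uncurry_apply_pair]
      by_cases hp : 0 < s ∧ s ≤ t
      · rw [indicator_of_mem (mem_Ioc.mpr hp), indicator_of_mem (show (t,s) ∈ {p : ℝ × ℝ | 0 < p.2 ∧ p.2 ≤ p.1} from hp)]
      · rw [indicator_of_notMem (fun hc => hp (mem_Ioc.mp hc)),
          indicator_of_notMem (show (t,s) ∉ {p : ℝ × ℝ | 0 < p.2 ∧ p.2 ≤ p.1} from hp)]
    rw [e]
    exact hsnd.indicator hS
  rw [step1, integral_integral_swap hunc]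
  refine setIntegral_congr_fun measurableSet_Ioc (fun s hs => ?_)
  have e : ∀ t : ℝ, (Ioc (0:ℝ) t).indicator f' s = (Ici s).indicator (fun _ => f' s) t := by
    intro t
    by_cases h : s ≤ t
    · rw [indicator_of_mem (mem_Ioc.mpr ⟨hs.1, h⟩), indicator_of_mem (mem_Ici.mpr h)]
    · rw [indicator_of_notMem (fun hc => h hc.2), indicator_of_notMem (fun hc => h (mem_Ici.mp hc))]
  simp_rw [e]
  rw [hμ, setIntegral_indicator measurableSet_Ici, setIntegral_const]
  have hset : Ioc (0:ℝ) 1 ∩ Ici s = Icc s 1 := by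
    ext x
    simp only [mem_inter_iff, mem_Ioc, mem_Ici, mem_Icc]
    constructor
    · rintro ⟨⟨_, hx1⟩, hsx⟩; exact ⟨hsx, hx1⟩
    · rintro ⟨hsx, hx1⟩; exact ⟨⟨lt_of_lt_of_le hs.1 hsx, hx1⟩, hsx⟩
  rw [hset, Real.volume_real_Icc_of_le hs.2]
  simp [smul_eq_mul]

lemma const_nonneg : 0 ≤ 11/96 - Real.sqrt 2/16 := by
  nlinarith [Real.sq_sqrt (show (0:ℝ) ≤ 2 by norm_num), Real.sqrt_nonneg 2,
    sq_nonneg (Real.sqrt 2 - 3/2)]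

lemma main_ineq (f f' : ℝ → ℝ)
    (hf : ∀ t ∈ Icc (0:ℝ) 1, f t = f 0 + ∫ s in (0:ℝ)..t, f' s)
    (hf' : IntervalIntegrable f' volume 0 1)
    (hf2 : IntervalIntegrable (fun t => (f' t)^2) volume 0 1) :
    |(∫ t in (0:ℝ)..1, f t) - Real.sqrt 2 / 8 * f 0
        - (1 - Real.sqrt 2 / 4) * f (1/2) - Real.sqrt 2 / 8 * f 1|
      ≤ Real.sqrt (11/96 - Real.sqrt 2 / 16) *
          Real.sqrt ((∫ t in (0:ℝ)..1, (f' t)^2) - (f 1 - f 0)^2) := by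
  have h01 : (0:ℝ) ≤ 1 := by norm_num
  have hh0 : (0:ℝ) ≤ 1/2 := by norm_num
  have hh1 : (1/2:ℝ) ≤ 1 := by norm_num
  have hfi1 : IntervalIntegrable f' volume 0 (1/2) :=
    hf'.mono_set (by rw [uIcc_of_le hh0, uIcc_of_le h01]; exact Icc_subset_Icc_right hh1)
  have hfi2 : IntervalIntegrable f' volume (1/2) 1 :=
    hf'.mono_set (by rw [uIcc_of_le hh1, uIcc_of_le h01]; exact Icc_subset_Icc_left hh0)
  obtain ⟨m, hm⟩ : ∃ m : ℝ, (∫ s in (0:ℝ)..1, f' s) = m := ⟨_, rfl⟩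
  have e1 : f 1 = f 0 + m := by rw [← hm]; exact hf 1 (by norm_num)
  have eh : f (1/2) = f 0 + ∫ s in (0:ℝ)..(1/2), f' s := hf (1/2) (by norm_num)
  -- integral of f
  have hII : IntervalIntegrable (fun t => ∫ s in (0:ℝ)..t, f' s) volume 0 1 := by
    apply ContinuousOn.intervalIntegrable
    exact intervalIntegral.continuousOn_primitive_interval' hf' left_mem_uIcc
  have hintf : (∫ t in (0:ℝ)..1, f t) = f 0 + ∫ s in (0:ℝ)..1, (1-s) * f' s := by
    have hcg := intervalIntegral.integral_congr (a := (0:ℝ)) (b := 1) (μ := volume)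
      (f := f) (g := fun t => f 0 + ∫ s in (0:ℝ)..t, f' s)
      (by rw [uIcc_of_le h01]; exact fun t ht => hf t ht)
    rw [hcg, intervalIntegral.integral_add intervalIntegrable_const hII,
      intervalIntegral.integral_const, prim hf']
    norm_num
  -- splits
  have i1mul : IntervalIntegrable (fun s => (1 - s) * f' s) volume 0 (1/2) :=
    hfi1.continuousOn_mul ((continuous_const.sub continuous_id).continuousOn)
  have i2mul : IntervalIntegrable (fun s => (1 - s) * f' s) volume (1/2) 1 :=
    hfi2.continuousOn_mul ((continuous_const.sub continuous_id).continuousOn)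
  have hsplit : (∫ s in (0:ℝ)..1, (1-s) * f' s)
      = (∫ s in (0:ℝ)..(1/2), (1-s) * f' s) + ∫ s in (1/2:ℝ)..1, (1-s) * f' s :=
    (intervalIntegral.integral_add_adjacent_intervals i1mul i2mul).symm
  have hmsplit : m = (∫ s in (0:ℝ)..(1/2), f' s) + ∫ s in (1/2:ℝ)..1, f' s := by
    rw [← hm]; exact (intervalIntegral.integral_add_adjacent_intervals hfi1 hfi2).symm
  have hA1 : (∫ s in (0:ℝ)..(1/2), (1-s) * f' s)
      = (∫ s in (0:ℝ)..(1/2), (Real.sqrt 2/8 - s) * f' s)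
        + (1 - Real.sqrt 2/8) * ∫ s in (0:ℝ)..(1/2), f' s := by
    have ii1 : IntervalIntegrable (fun s => (Real.sqrt 2/8 - s) * f' s) volume 0 (1/2) :=
      hfi1.continuousOn_mul ((continuous_const.sub continuous_id).continuousOn)
    have ii2 : IntervalIntegrable (fun s => (1 - Real.sqrt 2/8) * f' s) volume 0 (1/2) :=
      hfi1.const_mul _
    rw [← intervalIntegral.integral_const_mul, ← intervalIntegral.integral_add ii1 ii2]
    exact intervalIntegral.integral_congr (fun s _ => by ring)
  have hA2 : (∫ s in (1/2:ℝ)..1, (1-s) * f' s)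
      = (∫ s in (1/2:ℝ)..1, (1 - s - Real.sqrt 2/8) * f' s)
        + (Real.sqrt 2/8) * ∫ s in (1/2:ℝ)..1, f' s := by
    have ii1 : IntervalIntegrable (fun s => (1 - s - Real.sqrt 2/8) * f' s) volume (1/2) 1 :=
      hfi2.continuousOn_mul (((continuous_const.sub continuous_id).sub continuous_const).continuousOn)
    have ii2 : IntervalIntegrable (fun s => (Real.sqrt 2/8) * f' s) volume (1/2) 1 :=
      hfi2.const_mul _
    rw [← intervalIntegral.integral_const_mul, ← intervalIntegral.integral_add ii1 ii2]
    exact intervalIntegral.integral_congr (fun s _ => by ring)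
  have hX : (∫ t in (0:ℝ)..1, f t) - Real.sqrt 2 / 8 * f 0
        - (1 - Real.sqrt 2 / 4) * f (1/2) - Real.sqrt 2 / 8 * f 1
      = ∫ s in Ioc (0:ℝ) 1, K0 s * f' s := by
    rw [(K0mul hf'.1).2, hintf, e1, eh, hsplit, hmsplit, hA1, hA2]
    ring
  -- centering
  have hconst : IntegrableOn (fun _ : ℝ => m) (Ioc (0:ℝ) 1) volume :=
    integrableOn_const measure_Ioc_lt_top.ne
  have hfm_int : IntegrableOn (fun s => f' s - m) (Ioc (0:ℝ) 1) volume := hf'.1.sub hconst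
  have hcenter : (∫ s in Ioc (0:ℝ) 1, K0 s * f' s)
      = ∫ s in Ioc (0:ℝ) 1, K0 s * (f' s - m) := by
    rw [show (fun s => K0 s * (f' s - m)) = fun s => K0 s * f' s - m * K0 s from
        funext fun s => by ring,
      integral_sub (K0mul hf'.1).1 (K0_split.1.const_mul m), integral_const_mul, intK0_zero]
    ring
  -- variance
  have hIocf' : (∫ s in Ioc (0:ℝ) 1, f' s) = m := by
    rw [← intervalIntegral.integral_of_le h01]; exact hm
  have hIocf2 : (∫ s in Ioc (0:ℝ) 1, (f' s)^2) = ∫ t in (0:ℝ)..1, (f' t)^2 :=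
    (intervalIntegral.integral_of_le h01).symm
  have hvar_e : (fun s : ℝ => (f' s - m)^2)
      = fun s => ((f' s)^2 - (2*m) * f' s) + m^2 := funext fun s => by ring
  have hvar_int : IntegrableOn (fun s => (f' s - m)^2) (Ioc (0:ℝ) 1) volume := by
    rw [hvar_e]
    have j3 : IntegrableOn (fun s => (2*m) * f' s) (Ioc (0:ℝ) 1) volume := hf'.1.const_mul _
    exact (hf2.1.sub j3).add (integrableOn_const measure_Ioc_lt_top.ne)
  have hmeas1 : (∫ _ in Ioc (0:ℝ) 1, m^2) = m^2 := by
    rw [setIntegral_const, Real.volume_real_Ioc_of_le h01]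
    norm_num
  have hvar : (∫ s in Ioc (0:ℝ) 1, (f' s - m)^2)
      = (∫ t in (0:ℝ)..1, (f' t)^2) - m^2 := by
    have j3 : IntegrableOn (fun s => (2*m) * f' s) (Ioc (0:ℝ) 1) volume := hf'.1.const_mul _
    have j1 : IntegrableOn (fun s => (f' s)^2 - (2*m) * f' s) (Ioc (0:ℝ) 1) volume :=
      hf2.1.sub j3
    have j2 : IntegrableOn (fun _ : ℝ => m^2) (Ioc (0:ℝ) 1) volume :=
      integrableOn_const measure_Ioc_lt_top.ne
    rw [hvar_e, integral_add j1 j2, integral_sub hf2.1 j3, integral_const_mul, hIocf',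
      hIocf2, hmeas1]
    ring
  have hvar0 : 0 ≤ (∫ t in (0:ℝ)..1, (f' t)^2) - m^2 :=
    hvar ▸ integral_nonneg (fun s => sq_nonneg _)
  -- Cauchy-Schwarz
  have hcs := cs_Ioc (g := K0) (h := fun s => f' s - m) K0sq_split.1 hvar_int (K0mul hfm_int).1
  rw [intK0sq, hvar] at hcs
  have hfm : f 1 - f 0 = m := by rw [e1]; ring
  rw [hfm, hX, hcenter]
  calc |∫ s in Ioc (0:ℝ) 1, K0 s * (f' s - m)|
      = Real.sqrt ((∫ s in Ioc (0:ℝ) 1, K0 s * (f' s - m))^2) :=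
        (Real.sqrt_sq_eq_abs _).symm
    _ ≤ Real.sqrt ((11/96 - Real.sqrt 2/16) * ((∫ t in (0:ℝ)..1, (f' t)^2) - m^2)) :=
        Real.sqrt_le_sqrt hcs
    _ = Real.sqrt (11/96 - Real.sqrt 2/16) *
          Real.sqrt ((∫ t in (0:ℝ)..1, (f' t)^2) - m^2) :=
        Real.sqrt_mul const_nonneg _

noncomputable def F0 : ℝ → ℝ := fun t =>
  if t ≤ 1/2 then Real.sqrt 2/8 * t - t^2/2
  else t - t^2/2 - Real.sqrt 2/8 * t + Real.sqrt 2/8 - 1/2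

lemma K0_II : IntervalIntegrable K0 volume 0 1 :=
  (intervalIntegrable_iff_integrableOn_Ioc_of_le (by norm_num)).mpr K0_split.1

lemma K0sq_II : IntervalIntegrable (fun t => (K0 t)^2) volume 0 1 :=
  (intervalIntegrable_iff_integrableOn_Ioc_of_le (by norm_num)).mpr K0sq_split.1

lemma intK0_left {t : ℝ} (ht0 : 0 ≤ t) (ht : t ≤ 1/2) :
    (∫ s in (0:ℝ)..t, K0 s) = Real.sqrt 2/8 * t - t^2/2 := by
  have hcg : EqOn K0 (fun s => Real.sqrt 2/8 + (-1)*s + 0*s^2) (Set.uIcc 0 t) := by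
    intro s hs
    rw [uIcc_of_le ht0] at hs
    rw [K0_eq1 (le_trans hs.2 ht)]; ring
  rw [intervalIntegral.integral_congr hcg, ipoly]; ring

lemma intK0_right {t : ℝ} (ht : 1/2 ≤ t) :
    (∫ s in (1/2:ℝ)..t, K0 s) = (1 - Real.sqrt 2/8)*(t - 1/2) - (t^2 - 1/4)/2 := by
  rw [intervalIntegral.integral_of_le ht,
    setIntegral_congr_fun (g := fun s => (1 - Real.sqrt 2/8) + (-1)*s + 0*s^2)
      measurableSet_Ioc (fun s hs => by rw [K0_eq2 (not_le.mpr hs.1)]; ring),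
    ← intervalIntegral.integral_of_le ht, ipoly]
  ring

lemma F0_prim : ∀ t ∈ Icc (0:ℝ) 1, F0 t = F0 0 + ∫ s in (0:ℝ)..t, K0 s := by
  intro t ht
  have hF00 : F0 0 = 0 := by simp [F0]
  rw [hF00, zero_add]
  by_cases h : t ≤ 1/2
  · rw [intK0_left ht.1 h]
    simp only [F0, if_pos h]
  · have h2 : (1/2:ℝ) ≤ t := le_of_lt (not_le.mp h)
    have hki1 : IntervalIntegrable K0 volume 0 (1/2) :=
      K0_II.mono_set (by
        rw [uIcc_of_le (by norm_num : (0:ℝ) ≤ 1/2), uIcc_of_le (by norm_num : (0:ℝ) ≤ 1)]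
        exact Icc_subset_Icc_right (by norm_num))
    have hki2 : IntervalIntegrable K0 volume (1/2) t :=
      K0_II.mono_set (by
        rw [uIcc_of_le h2, uIcc_of_le (by norm_num : (0:ℝ) ≤ 1)]
        exact Icc_subset_Icc (by norm_num) ht.2)
    rw [← intervalIntegral.integral_add_adjacent_intervals hki1 hki2,
      intK0_left (by norm_num) (le_refl _), intK0_right h2]
    simp only [F0, if_neg h]
    ring

lemma intF0 : (∫ t in (0:ℝ)..1, F0 t) = Real.sqrt 2/32 - 1/24 := by
  rw [intervalIntegral.integral_of_le (by norm_num)]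
  have h := splitIoc (F := F0)
    (G1 := fun t => 0 + (Real.sqrt 2/8)*t + (-(1/2))*t^2)
    (G2 := fun t => (Real.sqrt 2/8 - 1/2) + (1 - Real.sqrt 2/8)*t + (-(1/2))*t^2)
    (fun t htt => by simp only [F0, if_pos htt.2]; ring)
    (fun t htt => by simp only [F0, if_neg (not_le.mpr htt.1)]; ring)
    ((Continuous.intervalIntegrable (by continuity) _ _).1)
    ((Continuous.intervalIntegrable (by continuity) _ _).1)
  rw [h.2, ipoly, ipoly]
  ring

theorem stmt_12 :
    (∀ f f' : ℝ → ℝ,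
      (∀ t ∈ Icc (0:ℝ) 1, f t = f 0 + ∫ s in (0:ℝ)..t, f' s) →
      IntervalIntegrable f' volume 0 1 →
      IntervalIntegrable (fun t => (f' t)^2) volume 0 1 →
      |(∫ t in (0:ℝ)..1, f t) - Real.sqrt 2 / 8 * f 0
          - (1 - Real.sqrt 2 / 4) * f (1/2) - Real.sqrt 2 / 8 * f 1|
        ≤ Real.sqrt (11/96 - Real.sqrt 2 / 16) *
            Real.sqrt ((∫ t in (0:ℝ)..1, (f' t)^2) - (f 1 - f 0)^2)) ∧
    ∀ c : ℝ,
      (∀ f f' : ℝ → ℝ,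
        (∀ t ∈ Icc (0:ℝ) 1, f t = f 0 + ∫ s in (0:ℝ)..t, f' s) →
        IntervalIntegrable f' volume 0 1 →
        IntervalIntegrable (fun t => (f' t)^2) volume 0 1 →
        |(∫ t in (0:ℝ)..1, f t) - Real.sqrt 2 / 8 * f 0
            - (1 - Real.sqrt 2 / 4) * f (1/2) - Real.sqrt 2 / 8 * f 1|
          ≤ c * Real.sqrt ((∫ t in (0:ℝ)..1, (f' t)^2) - (f 1 - f 0)^2)) →
      Real.sqrt (11/96 - Real.sqrt 2 / 16) ≤ c := by
  constructor
  · exact fun f f' hf h1 h2 => main_ineq f f' hf h1 h2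
  · intro c hc
    have h1 := hc F0 K0 F0_prim K0_II K0sq_II
    have hs2 : Real.sqrt 2 ^ 2 = 2 := Real.sq_sqrt (by norm_num)
    have hF00 : F0 0 = 0 := by simp [F0]
    have hF01 : F0 1 = 0 := by
      simp only [F0]
      rw [if_neg (by norm_num)]; ring
    have hF0h : F0 (1/2) = Real.sqrt 2/16 - 1/8 := by
      simp only [F0]
      rw [if_pos (by norm_num)]; ring
    have hK2 : (∫ t in (0:ℝ)..1, (K0 t)^2) = 11/96 - Real.sqrt 2/16 := by
      rw [intervalIntegral.integral_of_le (by norm_num)]; exact intK0sq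
    rw [intF0, hF00, hF01, hF0h, hK2] at h1
    have hval : Real.sqrt 2/32 - 1/24 - Real.sqrt 2 / 8 * 0
        - (1 - Real.sqrt 2 / 4) * (Real.sqrt 2/16 - 1/8) - Real.sqrt 2 / 8 * 0
        = 11/96 - Real.sqrt 2/16 := by
      linear_combination (1/64 : ℝ) * hs2
    rw [hval, show ((0:ℝ) - 0)^2 = 0 by norm_num, sub_zero,
      abs_of_nonneg const_nonneg] at h1
    have hpos : 0 < 11/96 - Real.sqrt 2/16 := by
      nlinarith [hs2, Real.sqrt_nonneg 2, sq_nonneg (Real.sqrt 2 - 3/2)]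
    have hsq : Real.sqrt (11/96 - Real.sqrt 2/16) * Real.sqrt (11/96 - Real.sqrt 2/16)
        = 11/96 - Real.sqrt 2/16 := Real.mul_self_sqrt const_nonneg
    have hsqpos : 0 < Real.sqrt (11/96 - Real.sqrt 2/16) := Real.sqrt_pos.mpr hpos
    have h2 : Real.sqrt (11/96 - Real.sqrt 2/16) * Real.sqrt (11/96 - Real.sqrt 2/16)
        ≤ c * Real.sqrt (11/96 - Real.sqrt 2/16) := by rw [hsq]; exact h1
    exact le_of_mul_le_mul_right h2 hsqpos
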